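/- Let G and H be finitely generated groups that are configuration equivalent, and let n ≥ 2. If G contains a subgroup isomorphic to the free group of rank n, then H contains a subgroup isomorphic to the free group of rank n. -/

import Mathlib

/-- `g` is an ordered generating tuple of `G`. -/
def Generates {G : Type*} [Group G] {n : ℕ} (g : Fin n → G) : Prop :=
  Subgroup.closure (Set.range g) = ⊤

/-- The configuration set of the configuration pair `(g, c)`. -/
def Config {G : Type*} [Group G] {n m : ℕ} (g : Fin n → G) (c : G → Fin m) :
    Set (Fin m × (Fin n → Fin m)) :=
  { p | ∃ x : G, c x = p.1 ∧ ∀ i, c (g i * x) = p.2 i }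

/-- Configuration equivalence of groups. -/
def ConfigEquiv (G H : Type*) [Group G] [Group H] : Prop :=
  (∀ (n m : ℕ) (g : Fin n → G) (c : G → Fin m), Generates g →
    ∃ (h : Fin n → H) (d : H → Fin m), Generates h ∧ Config g c = Config h d) ∧
  (∀ (n m : ℕ) (h : Fin n → H) (d : H → Fin m), Generates h →
    ∃ (g : Fin n → G) (c : G → Fin m), Generates g ∧ Config h d = Config g c)

/-! Auxiliary material for the ping-pong argument. -/

/-- color for a "positive" first letter `i`. -/
def posC (n : ℕ) (i : Fin n) : Fin (2 * n + 1) := ⟨2 * i.val + 1, by have := i.isLt; omega⟩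

/-- color for a "negative" first letter `i⁻¹`. -/
def negC (n : ℕ) (i : Fin n) : Fin (2 * n + 1) := ⟨2 * i.val + 2, by have := i.isLt; omega⟩

/-- The color of a word: determined by its first letter. -/
def headCol (n : ℕ) : List (Fin n × Bool) → Fin (2 * n + 1)
  | [] => 0
  | (i, b) :: _ => if b then posC n i else negC n i

lemma posC_ne_zero {n : ℕ} (i : Fin n) : posC n i ≠ 0 := by
  intro h
  have := congrArg Fin.val h
  simp [posC] at this

lemma negC_ne_zero {n : ℕ} (i : Fin n) : negC n i ≠ 0 := by
  intro h
  have := congrArg Fin.val h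
  simp [negC] at this

lemma posC_ne_negC {n : ℕ} (i j : Fin n) : posC n i ≠ negC n j := by
  intro h
  have := congrArg Fin.val h
  simp only [posC, negC] at this
  omega

lemma posC_inj {n : ℕ} {i j : Fin n} (h : posC n i = posC n j) : i = j := by
  have := congrArg Fin.val h
  simp only [posC] at this
  exact Fin.ext (by omega)

lemma negC_inj {n : ℕ} {i j : Fin n} (h : negC n i = negC n j) : i = j := by
  have := congrArg Fin.val h
  simp only [negC] at this
  exact Fin.ext (by omega)

/-- A list has no adjacent cancelling pair. -/
def RedList {n : ℕ} (L : List (Fin n × Bool)) : Prop :=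
  ∀ (L₂ : List (Fin n × Bool)) (j : Fin n) (b : Bool) (L₃ : List (Fin n × Bool)),
    L ≠ L₂ ++ (j, b) :: (j, !b) :: L₃

lemma redList_toWord {n : ℕ} (w : FreeGroup (Fin n)) : RedList w.toWord := by
  intro L₂ j b L₃ h
  have h2 : FreeGroup.reduce w.toWord = L₂ ++ (j, b) :: (j, !b) :: L₃ := by
    rw [FreeGroup.reduce_toWord]; exact h
  exact FreeGroup.reduce.not h2

lemma redList_tail {n : ℕ} {a : Fin n × Bool} {L : List (Fin n × Bool)}
    (h : RedList (a :: L)) : RedList L := by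
  intro L₂ j b L₃ hL
  exact h (a :: L₂) j b L₃ (by simp [hL])

lemma redList_head {n : ℕ} {j k : Fin n} {s ss : Bool} {L : List (Fin n × Bool)}
    (h : RedList ((j, s) :: (k, ss) :: L)) : ¬(k = j ∧ ss = !s) := by
  rintro ⟨rfl, rfl⟩
  exact h [] _ _ L rfl

/-- The G-side: an injective map from a free group yields a coloring with the
key configuration properties. -/
lemma exists_coloring {G : Type*} [Group G] {n : ℕ} (f : FreeGroup (Fin n) →* G)
    (hf : Function.Injective f) :
    ∃ c : G → Fin (2 * n + 1), (∃ x0 : G, c x0 = 0) ∧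
      ∀ (i : Fin n) (x : G),
        (c x ≠ negC n i → c (f (FreeGroup.of i) * x) = posC n i) ∧
        (c x = negC n i → c (f (FreeGroup.of i) * x) ≠ posC n i) := by
  classical
  set F : Subgroup G := f.range with hF
  let s : Setoid G := QuotientGroup.rightRel F
  let q : G → Quotient s := Quotient.mk s
  let rep : G → G := fun x => (q x).out
  have hrep_mk : ∀ x, q (rep x) = q x := fun x => Quotient.out_eq _
  have hmem : ∀ x, x * (rep x)⁻¹ ∈ F := by
    intro x
    have h1 : s (rep x) x := Quotient.exact (hrep_mk x)
    exact (QuotientGroup.rightRel_apply).1 h1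
  have hmem' : ∀ x, ∃ v : FreeGroup (Fin n), f v = x * (rep x)⁻¹ := fun x =>
    MonoidHom.mem_range.1 (hmem x)
  let u : G → FreeGroup (Fin n) := fun x => (hmem' x).choose
  have hu : ∀ x, f (u x) = x * (rep x)⁻¹ := fun x => (hmem' x).choose_spec
  have hqmul : ∀ (i : Fin n) (x : G), q (f (FreeGroup.of i) * x) = q x := by
    intro i x
    apply Quotient.sound
    have h2 : x * (f (FreeGroup.of i) * x)⁻¹ = (f (FreeGroup.of i))⁻¹ := by group
    have : s (f (FreeGroup.of i) * x) x := by
      rw [QuotientGroup.rightRel_apply, h2]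
      exact inv_mem ⟨FreeGroup.of i, rfl⟩
    exact this
  have hrepmul : ∀ (i : Fin n) (x : G), rep (f (FreeGroup.of i) * x) = rep x := by
    intro i x
    show (q (f (FreeGroup.of i) * x)).out = (q x).out
    rw [hqmul]
  have humul : ∀ (i : Fin n) (x : G), u (f (FreeGroup.of i) * x) = FreeGroup.of i * u x := by
    intro i x
    apply hf
    rw [hu, map_mul, hu, hrepmul, mul_assoc]
  let c : G → Fin (2 * n + 1) := fun x => headCol n (u x).toWord
  have hword : ∀ (i : Fin n) (x : G),
      (FreeGroup.of i * u x).toWord = FreeGroup.reduce ((i, true) :: (u x).toWord) := by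
    intro i x
    have h1 : FreeGroup.of i * u x = FreeGroup.mk ((i, true) :: (u x).toWord) := by
      conv_lhs => rw [← FreeGroup.mk_toWord (x := u x)]
      rw [show (FreeGroup.of i : FreeGroup (Fin n)) = FreeGroup.mk [(i, true)] from rfl,
        FreeGroup.mul_mk]
      rfl
    rw [h1, FreeGroup.toWord_mk]
  refine ⟨c, ⟨rep 1, ?_⟩, ?_⟩
  · -- the representative has color 0
    have hrr : rep (rep 1) = rep 1 := congrArg Quotient.out (hrep_mk 1)
    have h1 : f (u (rep 1)) = 1 := by
      rw [hu, hrr, mul_inv_cancel]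
    have h2 : u (rep 1) = 1 := hf (by rw [h1, map_one])
    show headCol n (u (rep 1)).toWord = 0
    rw [h2, FreeGroup.toWord_one]
    rfl
  · intro i x
    have hred : FreeGroup.reduce (u x).toWord = (u x).toWord := FreeGroup.reduce_toWord _
    constructor
    · intro hne
      show headCol n (u (f (FreeGroup.of i) * x)).toWord = posC n i
      rw [humul, hword]
      rcases hW : (u x).toWord with _ | ⟨⟨j, bb⟩, t⟩
      · rw [FreeGroup.reduce.cons]
        rw [hW] at hred
        rw [hred]
        rfl
      · rw [FreeGroup.reduce.cons]
        rw [hW] at hred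
        rw [hred]
        have hcond : ¬((i, true).1 = (j, bb).1 ∧ (i, true).2 = !(j, bb).2) := by
          rintro ⟨h1, h2⟩
          simp only at h1 h2
          have hbb : bb = false := by
            cases bb
            · rfl
            · simp at h2
          apply hne
          show headCol n (u x).toWord = negC n i
          rw [hW, hbb, ← h1]
          simp [headCol]
        simp only [hcond, if_false]
        simp [headCol]
    · intro heq
      -- c x = negC n i forces the word to start with (i, false)
      have hW : ∃ t, (u x).toWord = (i, false) :: t := by
        rcases hW : (u x).toWord with _ | ⟨⟨j, bb⟩, t⟩
        · exfalso
          have : headCol n (u x).toWord = negC n i := heq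
          rw [hW] at this
          exact negC_ne_zero i this.symm
        · have : headCol n (u x).toWord = negC n i := heq
          rw [hW] at this
          cases bb
          · simp only [headCol, if_false, Bool.false_eq_true] at this
            have := negC_inj this
            exact ⟨t, by rw [this]⟩
          · simp only [headCol, if_true] at this
            exact absurd this (posC_ne_negC j i)
      obtain ⟨t, hW⟩ := hW
      intro hcon
      rw [hW] at hred
      have hredtop : FreeGroup.reduce ((i, true) :: (i, false) :: t) = t := by
        rw [FreeGroup.reduce.cons, hred]
        simp
      have hc2 : headCol n t = posC n i := by
        have h0 : headCol n (u (f (FreeGroup.of i) * x)).toWord = posC n i := hcon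
        rw [humul, hword, hW, hredtop] at h0
        exact h0
      -- now headCol n t = posC n i, derive contradiction
      rcases ht : t with _ | ⟨⟨k, bb⟩, t'⟩
      · rw [ht] at hc2
        exact posC_ne_zero i hc2.symm
      · rw [ht] at hc2
        cases bb
        · simp only [headCol, Bool.false_eq_true, if_false] at hc2
          exact posC_ne_negC i k hc2.symm
        · simp only [headCol, if_true] at hc2
          have hki : k = i := posC_inj hc2
          subst hki
          rw [ht] at hW
          exact redList_toWord (u x) [] k false t' (by simpa using hW)

/-- The H-side ping-pong lemma. -/
lemma pingpong {H : Type*} [Group H] {n : ℕ} (h : Fin n → H) (d : H → Fin (2 * n + 1))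
    (y0 : H) (hy0 : d y0 = 0)
    (hA : ∀ (i : Fin n) (y : H), d y ≠ negC n i → d (h i * y) = posC n i)
    (hB : ∀ (i : Fin n) (y : H), d y = negC n i → d (h i * y) ≠ posC n i) :
    Function.Injective (FreeGroup.lift h) := by
  classical
  let step : Fin n × Bool → H := fun x => cond x.2 (h x.1) (h x.1)⁻¹
  have hA' : ∀ (i : Fin n) (y : H), d y ≠ posC n i → d ((h i)⁻¹ * y) = negC n i := by
    intro i y hne
    by_contra hcon
    have := hA i _ hcon
    rw [mul_inv_cancel_left] at this
    exact hne this
  have key : ∀ (L : List (Fin n × Bool)) (j : Fin n) (s : Bool),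
      RedList ((j, s) :: L) →
      d ((((j, s) :: L).map step).prod * y0) = (if s then posC n j else negC n j) := by
    intro L
    induction L with
    | nil =>
      intro j s _
      simp only [List.map_cons, List.map_nil, List.prod_cons, List.prod_nil, mul_one]
      cases s
      · simp only [if_false, Bool.false_eq_true]
        exact hA' j y0 (by rw [hy0]; exact fun hh => posC_ne_zero j hh.symm)
      · simp only [if_true]
        exact hA j y0 (by rw [hy0]; exact fun hh => negC_ne_zero j hh.symm)
    | cons a tl ih =>
      intro j s hred
      obtain ⟨k, ss⟩ := a
      have hz := ih k ss (redList_tail hred)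
      have hhead := redList_head hred
      have hprod : ((((j, s) :: (k, ss) :: tl).map step).prod : H) =
          step (j, s) * (((k, ss) :: tl).map step).prod := by
        simp [List.prod_cons]
      rw [hprod, mul_assoc]
      set z : H := (((k, ss) :: tl).map step).prod * y0 with hzdef
      cases s
      · -- step = (h j)⁻¹, need d z ≠ posC n j
        simp only [if_false, Bool.false_eq_true]
        apply hA'
        rw [hz]
        cases ss
        · simp only [if_false, Bool.false_eq_true]
          exact fun hh => posC_ne_negC j k hh.symm
        · simp only [if_true]
          intro hh
          exact hhead ⟨posC_inj hh, by simp⟩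
      · -- step = h j, need d z ≠ negC n j
        simp only [if_true]
        apply hA
        rw [hz]
        cases ss
        · simp only [if_false, Bool.false_eq_true]
          intro hh
          have := negC_inj hh
          exact hhead ⟨this, by simp⟩
        · simp only [if_true]
          exact fun hh => posC_ne_negC k j hh
  rw [injective_iff_map_eq_one]
  intro w hw
  by_contra hne
  have hWne : w.toWord ≠ [] := fun hh => hne (FreeGroup.toWord_eq_nil_iff.1 hh)
  rcases hW : w.toWord with _ | ⟨⟨j, s⟩, L⟩
  · exact hWne hW
  · have hlift : FreeGroup.lift h w = ((w.toWord).map step).prod := by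
      conv_lhs => rw [← FreeGroup.mk_toWord (x := w)]
      rw [FreeGroup.lift_mk]
    have h1 : d (FreeGroup.lift h w * y0) = d y0 := by rw [hw, one_mul]
    rw [hlift, hW, hy0] at h1
    have h2 := key L j s (by rw [← hW]; exact redList_toWord w)
    rw [h1] at h2
    cases s
    · exact negC_ne_zero j h2.symm
    · exact posC_ne_zero j h2.symm

theorem stmt4 (G H : Type*) [Group G] [Group H] [Group.FG G] [Group.FG H]
    (hGH : ConfigEquiv G H) (n : ℕ) (hn : 2 ≤ n)
    (hfree : ∃ f : FreeGroup (Fin n) →* G, Function.Injective f) :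
    ∃ f : FreeGroup (Fin n) →* H, Function.Injective f := by
  classical
  obtain ⟨f, hf⟩ := hfree
  obtain ⟨c, ⟨x0, hx0⟩, hc⟩ := exists_coloring f hf
  obtain ⟨S, hScl, hSfin⟩ := Group.fg_iff.mp ‹Group.FG G›
  set Sf : Finset G := hSfin.toFinset with hSf
  set k : ℕ := Sf.card with hk
  let t : Fin k → G := fun i => (Sf.equivFin.symm i : G)
  have htrange : Set.range t = (Sf : Set G) := by
    ext x
    constructor
    · rintro ⟨i, rfl⟩
      exact (Sf.equivFin.symm i).2
    · intro hx
      exact ⟨Sf.equivFin ⟨x, hx⟩, by simp [t]⟩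
  set g : Fin (n + k) → G := Fin.append (fun i => f (FreeGroup.of i)) t with hg
  have hgen : Generates g := by
    have hsub : S ⊆ Set.range g := by
      intro x hx
      rw [← hSfin.coe_toFinset, ← hSf, ← htrange] at hx
      obtain ⟨i, rfl⟩ := hx
      exact ⟨Fin.natAdd n i, Fin.append_right _ _ i⟩
    rw [Generates, eq_top_iff, ← hScl]
    exact Subgroup.closure_mono hsub
  obtain ⟨h', d, _hgen', hcfg⟩ := hGH.1 (n + k) (2 * n + 1) g c hgen
  set h : Fin n → H := fun i => h' (Fin.castAdd k i) with hh
  -- existence of a 0-colored point in H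
  have hy0 : ∃ y0 : H, d y0 = 0 := by
    have hmem : (⟨c x0, fun j => c (g j * x0)⟩ :
        Fin (2 * n + 1) × (Fin (n + k) → Fin (2 * n + 1))) ∈ Config g c :=
      ⟨x0, rfl, fun _ => rfl⟩
    rw [hcfg] at hmem
    obtain ⟨y0, hy1, _⟩ := hmem
    exact ⟨y0, by rw [hy1, hx0]⟩
  obtain ⟨y0, hy0⟩ := hy0
  have main : ∀ (i : Fin n) (y : H),
      (d y ≠ negC n i → d (h i * y) = posC n i) ∧
      (d y = negC n i → d (h i * y) ≠ posC n i) := by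
    intro i y
    have hmem : (⟨d y, fun j => d (h' j * y)⟩ :
        Fin (2 * n + 1) × (Fin (n + k) → Fin (2 * n + 1))) ∈ Config h' d :=
      ⟨y, rfl, fun _ => rfl⟩
    rw [← hcfg] at hmem
    obtain ⟨x, hx1, hx2⟩ := hmem
    have hgi : g (Fin.castAdd k i) = f (FreeGroup.of i) := Fin.append_left _ _ i
    have h2 := hx2 (Fin.castAdd k i)
    rw [hgi] at h2
    constructor
    · intro hney
      have hnex : c x ≠ negC n i := by rw [hx1]; exact hney
      have := (hc i x).1 hnex
      rw [h2] at this
      exact this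
    · intro heqy
      have heqx : c x = negC n i := by rw [hx1]; exact heqy
      have := (hc i x).2 heqx
      rw [h2] at this
      exact this
  exact ⟨FreeGroup.lift h, pingpong h d y0 hy0
    (fun i y => (main i y).1) (fun i y => (main i y).2)⟩
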